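/- For any connected graph G of order n ≥ 2, the outer-connected domination number of the middle graph of the corona G ∘ K₁ satisfies n + ⌈n/2⌉ ≤ γ̃_c(M(G ∘ K₁)) ≤ 2n. -/

import Mathlib

open SimpleGraph

/-- `S` is a dominating set of `H`: every vertex is in `S` or adjacent to a vertex of `S`. -/
def IsDomSet {V : Type*} (H : SimpleGraph V) (S : Set V) : Prop :=
  ∀ v : V, ∃ u ∈ S, u = v ∨ H.Adj u v

/-- The connected domination number: minimum size of a dominating set inducing a
connected subgraph. -/
noncomputable def connDomNum {V : Type*} (H : SimpleGraph V) : ℕ :=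
  sInf {k | ∃ S : Set V, IsDomSet H S ∧ (H.induce S).Connected ∧ S.ncard = k}

/-- The outer-connected domination number: minimum size of a dominating set whose
complement induces a connected subgraph. -/
noncomputable def outConnDomNum {V : Type*} (H : SimpleGraph V) : ℕ :=
  sInf {k | ∃ S : Set V, IsDomSet H S ∧ (H.induce Sᶜ).Connected ∧ S.ncard = k}

/-- The middle graph `M(G)`: vertices are `V(G) ∪ E(G)`; a vertex is adjacent to its
incident edges, and two edges are adjacent iff they share a vertex. -/
def middleGraph {V : Type*} (G : SimpleGraph V) : SimpleGraph (V ⊕ G.edgeSet) where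
  Adj x y :=
    match x, y with
    | Sum.inl _, Sum.inl _ => False
    | Sum.inl v, Sum.inr e => v ∈ (e : Sym2 V)
    | Sum.inr e, Sum.inl v => v ∈ (e : Sym2 V)
    | Sum.inr e, Sum.inr f => e ≠ f ∧ ∃ v, v ∈ (e : Sym2 V) ∧ v ∈ (f : Sym2 V)
  symm := by
    constructor
    rintro (v | e) (w | f) h
    · exact h.elim
    · exact h
    · exact h
    · exact ⟨Ne.symm h.1, h.2.imp fun v hv => ⟨hv.2, hv.1⟩⟩
  loopless := by
    constructor
    rintro (v | e) h
    · exact h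
    · exact h.1 rfl

/-- The edge cover number `ρ(G)`: minimum number of edges covering all vertices. -/
noncomputable def edgeCoverNum {V : Type*} (G : SimpleGraph V) : ℕ :=
  sInf {k | ∃ C : Set (Sym2 V), C ⊆ G.edgeSet ∧ (∀ v : V, ∃ e ∈ C, v ∈ e) ∧ C.ncard = k}

/-- The wheel graph with hub `none` and a cycle on `ZMod n` (so `n + 1` vertices). -/
def wheelGraph (n : ℕ) : SimpleGraph (Option (ZMod n)) where
  Adj x y :=
    match x, y with
    | none, none => False
    | none, some _ => True
    | some _, none => True
    | some i, some j => i ≠ j ∧ (i - j = 1 ∨ j - i = 1)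
  symm := by
    constructor
    rintro (_ | i) (_ | j) h
    · exact h.elim
    · trivial
    · trivial
    · exact ⟨h.1.symm, h.2.symm⟩
  loopless := by
    constructor
    rintro (_ | i) h
    · exact h
    · exact h.1 rfl

/-- The friendship graph `F n`: `n` triangles sharing the common vertex `none`. -/
def friendshipGraph (n : ℕ) : SimpleGraph (Option (Fin n × Fin 2)) where
  Adj x y :=
    match x, y with
    | none, none => False
    | none, some _ => True
    | some _, none => True
    | some (i, a), some (j, b) => i = j ∧ a ≠ b
  symm := by
    constructor
    rintro (_ | ⟨i, a⟩) (_ | ⟨j, b⟩) h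
    · exact h.elim
    · trivial
    · trivial
    · exact ⟨h.1.symm, h.2.symm⟩
  loopless := by
    constructor
    rintro (_ | ⟨i, a⟩) h
    · exact h
    · exact h.2 rfl

/-- The corona `G ∘ K₁`: each vertex `Sum.inl v` of `G` gets a pendant vertex `Sum.inr v`. -/
def corona {V : Type*} (G : SimpleGraph V) : SimpleGraph (V ⊕ V) where
  Adj x y :=
    match x, y with
    | Sum.inl v, Sum.inl w => G.Adj v w
    | Sum.inl v, Sum.inr w => v = w
    | Sum.inr v, Sum.inl w => v = w
    | Sum.inr _, Sum.inr _ => False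
  symm := by
    constructor
    rintro (v | v) (w | w) h
    · exact h.symm
    · exact h.symm
    · exact h.symm
    · exact h.elim
  loopless := by
    constructor
    rintro (v | v) h
    · exact (G.ne_of_adj h) rfl
    · exact h

/-- The 2-corona `G ∘ P₂`: each vertex `Sum.inl v` of `G` gets a pendant path
`Sum.inl v — Sum.inr (Sum.inl v) — Sum.inr (Sum.inr v)`. -/
def corona2 {V : Type*} (G : SimpleGraph V) : SimpleGraph (V ⊕ (V ⊕ V)) where
  Adj x y :=
    match x, y with
    | Sum.inl v, Sum.inl w => G.Adj v w
    | Sum.inl v, Sum.inr (Sum.inl w) => v = w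
    | Sum.inr (Sum.inl v), Sum.inl w => v = w
    | Sum.inr (Sum.inl v), Sum.inr (Sum.inr w) => v = w
    | Sum.inr (Sum.inr v), Sum.inr (Sum.inl w) => v = w
    | _, _ => False
  symm := by
    constructor
    rintro (v | v | v) (w | w | w) h
    · exact h.symm
    · exact h.symm
    · exact h.elim
    · exact h.symm
    · exact h.elim
    · exact h.symm
    · exact h.elim
    · exact h.symm
    · exact h.elim
  loopless := by
    constructor
    rintro (v | v | v) h
    · exact (G.ne_of_adj h) rfl
    · exact h
    · exact h

/-- The join `G + K̄ p` of `G` with the empty graph on `p` vertices. -/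
def joinEmpty {V : Type*} (G : SimpleGraph V) (p : ℕ) : SimpleGraph (V ⊕ Fin p) where
  Adj x y :=
    match x, y with
    | Sum.inl v, Sum.inl w => G.Adj v w
    | Sum.inl _, Sum.inr _ => True
    | Sum.inr _, Sum.inl _ => True
    | Sum.inr _, Sum.inr _ => False
  symm := by
    constructor
    rintro (v | v) (w | w) h
    · exact h.symm
    · trivial
    · trivial
    · exact h.elim
  loopless := by
    constructor
    rintro (v | v) h
    · exact (G.ne_of_adj h) rfl
    · exact h

namespace StmtAux
variable {V : Type*} (G : SimpleGraph V)

def pe (v : V) : (corona G).edgeSet := ⟨s(Sum.inl v, Sum.inr v), rfl⟩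

def liftWalk : ∀ {a b : V}, G.Walk a b → (corona G).Walk (Sum.inl a) (Sum.inl b)
  | _, _, SimpleGraph.Walk.nil => SimpleGraph.Walk.nil
  | _, _, SimpleGraph.Walk.cons h p =>
    SimpleGraph.Walk.cons (show (corona G).Adj (Sum.inl _) (Sum.inl _) from h) (liftWalk p)

lemma corona_connected (hc : G.Connected) : (corona G).Connected := by
  have hne : Nonempty V := hc.nonempty
  rw [connected_iff]
  refine ⟨?_, ⟨Sum.inl hne.some⟩⟩
  have key : ∀ a b : V, (corona G).Reachable (Sum.inl a) (Sum.inr b) := fun a b =>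
    ⟨(liftWalk G (hc.preconnected a b).some).concat
      (show (corona G).Adj (Sum.inl b) (Sum.inr b) from rfl)⟩
  rintro (a | a) (b | b)
  · exact ⟨liftWalk G (hc.preconnected a b).some⟩
  · exact key a b
  · exact (key b a).symm
  · exact ((key a a).symm.trans (key a b))

/-- The vertex part of the middle graph, as a set. -/
def Svx : Set ((V ⊕ V) ⊕ (corona G).edgeSet) := Set.range Sum.inl

lemma inr_mem_compl (e : (corona G).edgeSet) : Sum.inr e ∈ (Svx G)ᶜ := by
  rintro ⟨x, hx⟩; exact Sum.inl_ne_inr hx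

lemma reach_share (e f : (corona G).edgeSet) (v : V ⊕ V)
    (hv : v ∈ (e : Sym2 (V ⊕ V))) (hv' : v ∈ (f : Sym2 (V ⊕ V))) :
    ((middleGraph (corona G)).induce (Svx G)ᶜ).Reachable
      ⟨Sum.inr e, inr_mem_compl G e⟩ ⟨Sum.inr f, inr_mem_compl G f⟩ := by
  by_cases h : e = f
  · subst h; exact SimpleGraph.Reachable.refl _
  · exact SimpleGraph.Adj.reachable
      (show (middleGraph (corona G)).Adj (Sum.inr e) (Sum.inr f) from ⟨h, v, hv, hv'⟩)

lemma reach_walk {a b : V ⊕ V} (w : (corona G).Walk a b) :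
    ∀ (e f : (corona G).edgeSet), a ∈ (e : Sym2 (V ⊕ V)) → b ∈ (f : Sym2 (V ⊕ V)) →
    ((middleGraph (corona G)).induce (Svx G)ᶜ).Reachable
      ⟨Sum.inr e, inr_mem_compl G e⟩ ⟨Sum.inr f, inr_mem_compl G f⟩ := by
  induction w with
  | nil => exact fun e f he hf => reach_share G e f _ he hf
  | @cons a c b h p ih =>
    intro e f he hf
    have hg : s(a, c) ∈ (corona G).edgeSet := h
    exact (reach_share G e ⟨_, hg⟩ a he (Sym2.mem_mk_left a c)).trans
      (ih ⟨_, hg⟩ f (Sym2.mem_mk_right a c) hf)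

lemma upper_conn (hc : G.Connected) :
    ((middleGraph (corona G)).induce (Svx G)ᶜ).Connected := by
  have hne : Nonempty V := hc.nonempty
  rw [connected_iff]
  constructor
  · rintro ⟨(x | e), hx⟩ ⟨(y | f), hy⟩
    · exact absurd ⟨x, rfl⟩ hx
    · exact absurd ⟨x, rfl⟩ hx
    · exact absurd ⟨y, rfl⟩ hy
    · have ha := Sym2.out_fst_mem (e : Sym2 (V ⊕ V))
      have hb := Sym2.out_fst_mem (f : Sym2 (V ⊕ V))
      exact reach_walk G ((corona_connected G hc).preconnected _ _).some e f ha hb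
  · exact ⟨⟨Sum.inr (pe G hne.some), inr_mem_compl G _⟩⟩

lemma upper_dom : IsDomSet (middleGraph (corona G)) (Svx G) := by
  rintro (x | e)
  · exact ⟨Sum.inl x, ⟨x, rfl⟩, Or.inl rfl⟩
  · exact ⟨Sum.inl (e : Sym2 (V ⊕ V)).out.1, ⟨_, rfl⟩,
      Or.inr (Sym2.out_fst_mem _)⟩

lemma upper_ncard [Fintype V] : (Svx G).ncard = 2 * Fintype.card V := by
  rw [Svx, ← Set.image_univ, Set.ncard_image_of_injective _ Sum.inl_injective,
    Set.ncard_univ, Nat.card_eq_fintype_card, Fintype.card_sum]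
  ring

lemma leaf_nbr (v : V) (u : (V ⊕ V) ⊕ (corona G).edgeSet)
    (h : (middleGraph (corona G)).Adj u (Sum.inl (Sum.inr v))) : u = Sum.inr (pe G v) := by
  match u with
  | Sum.inl _ => exact h.elim
  | Sum.inr f =>
    obtain ⟨fv, hf⟩ := f
    induction fv using Sym2.ind with
    | _ a b =>
      have hmem : Sum.inr v ∈ s(a, b) := h
      have hadj : (corona G).Adj a b := hf
      rw [Sym2.mem_iff] at hmem
      congr 1
      ext : 1
      rcases hmem with rfl | rfl
      · match b, hadj with
        | Sum.inl w, hadj =>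
          have : v = w := hadj
          subst this
          exact Sym2.eq_swap
      · match a, hadj with
        | Sum.inl w, hadj =>
          have : w = v := hadj
          subst this
          rfl

section Lower
open Classical in
lemma lower [Fintype V] (S : Set ((V ⊕ V) ⊕ (corona G).edgeSet))
    (hdom : IsDomSet (middleGraph (corona G)) S)
    (hconn : ((middleGraph (corona G)).induce Sᶜ).Connected)
    (h2 : 2 ≤ Fintype.card V) :
    Fintype.card V + (Fintype.card V + 1) / 2 ≤ S.ncard := by
  classical
  set n := Fintype.card V with hn
  -- leaf, pendant, original-vertex names
  set L : V → (V ⊕ V) ⊕ (corona G).edgeSet := fun v => Sum.inl (Sum.inr v) with hLdef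
  set P : V → (V ⊕ V) ⊕ (corona G).edgeSet := fun v => Sum.inr (pe G v) with hPdef
  set X : V → (V ⊕ V) ⊕ (corona G).edgeSet := fun v => Sum.inl (Sum.inl v) with hXdef
  have hcardE : n ≤ Nat.card (corona G).edgeSet := by
    rw [Nat.card_eq_fintype_card]
    exact hn ▸ Fintype.card_le_of_injective (pe G) (fun v w h => by
      have := congrArg Subtype.val h
      simpa [pe, Sym2.eq_iff] using this)
  have hcardT : 3 * n ≤ Nat.card ((V ⊕ V) ⊕ (corona G).edgeSet) := by
    rw [Nat.card_eq_fintype_card, Fintype.card_sum, Fintype.card_sum]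
    have := hcardE
    rw [Nat.card_eq_fintype_card] at this
    omega
  by_cases hL : ∀ v : V, L v ∈ S
  · -- all leaves in S; count dominators of the X's
    choose d hdS hdX using fun v => hdom (X v)
    have hd' : ∀ v, d v ∈ S \ Set.range L := by
      intro v
      refine ⟨hdS v, ?_⟩
      rintro ⟨u, hu⟩
      rcases hdX v with h | h
      · rw [← hu] at h; exact Sum.inr_ne_inl (Sum.inl_injective (show Sum.inl (Sum.inr u) = Sum.inl (Sum.inl v) from h))
      · rw [← hu] at h; exact h
    -- fiber bound
    have hfib : ∀ b ∈ Finset.univ.image d,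
        (Finset.univ.filter fun v => d v = b).card ≤ 2 := by
      rintro (z | f) _
      · refine le_trans (Finset.card_le_one.mpr ?_) (by norm_num)
        intro v hv w hw
        simp only [Finset.mem_filter] at hv hw
        have h1 : Sum.inl z = X v := by
          rcases hv.2 ▸ hdX v with h | h
          · exact h
          · exact absurd h (by rintro ⟨⟩)
        have h2 : Sum.inl z = X w := by
          rcases hw.2 ▸ hdX w with h | h
          · exact h
          · exact absurd h (by rintro ⟨⟩)
        have := h1.symm.trans h2
        exact Sum.inl_injective (Sum.inl_injective this)
      · have hmem : ∀ v, d v = Sum.inr f → Sum.inl v ∈ (f : Sym2 (V ⊕ V)) := by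
          intro v hv
          rcases hv ▸ hdX v with h | h
          · exact absurd h (by rintro ⟨⟩)
          · exact h
        obtain ⟨fv, hf⟩ := f
        induction fv using Sym2.ind with
        | _ p q =>
          have hsub : (Finset.univ.filter fun v => d v = Sum.inr ⟨s(p,q), hf⟩) ⊆
              (Finset.univ.filter fun v => Sum.inl v = p) ∪
              (Finset.univ.filter fun v => Sum.inl v = q) := by
            intro v hv
            simp only [Finset.mem_filter] at hv
            have := hmem v hv.2
            rw [Sym2.mem_iff] at this
            simp only [Finset.mem_union, Finset.mem_filter]
            tauto
          refine le_trans (Finset.card_le_card hsub) (le_trans (Finset.card_union_le _ _) ?_)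
          have c1 : (Finset.univ.filter fun v : V => Sum.inl v = p).card ≤ 1 :=
            Finset.card_le_one.mpr fun v hv w hw => by
              simp only [Finset.mem_filter] at hv hw
              exact Sum.inl_injective (hv.2.trans hw.2.symm)
          have c2 : (Finset.univ.filter fun v : V => Sum.inl v = q).card ≤ 1 :=
            Finset.card_le_one.mpr fun v hv w hw => by
              simp only [Finset.mem_filter] at hv hw
              exact Sum.inl_injective (hv.2.trans hw.2.symm)
          omega
    have hmaps : ∀ v ∈ (Finset.univ : Finset V), d v ∈ Finset.univ.image d :=
      fun v _ => Finset.mem_image_of_mem d (Finset.mem_univ v)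
    have hcount : n ≤ 2 * (Finset.univ.image d).card := by
      have := Finset.card_le_mul_card_image_of_maps_to hmaps 2 hfib
      simpa [hn] using this
    -- image ⊆ S \ range L
    have himg : ((Finset.univ.image d : Finset _) : Set _) ⊆ S \ Set.range L := by
      intro x hx
      simp only [Finset.coe_image, Set.mem_image] at hx
      obtain ⟨v, _, rfl⟩ := hx
      exact hd' v
    have hS' : (n + 1) / 2 ≤ (S \ Set.range L).ncard := by
      have h1 : (Finset.univ.image d).card ≤ (S \ Set.range L).ncard := by
        rw [← Set.ncard_coe_finset]
        exact Set.ncard_le_ncard himg (Set.toFinite _)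
      omega
    have hunion : Set.range L ∪ (S \ Set.range L) ⊆ S := by
      rintro x (⟨v, rfl⟩ | hx)
      · exact hL v
      · exact hx.1
    have hdisj : Disjoint (Set.range L) (S \ Set.range L) := Set.disjoint_sdiff_right
    have hRange : (Set.range L).ncard = n := by
      rw [← Set.image_univ, Set.ncard_image_of_injective _
        (fun a b h => Sum.inr_injective (Sum.inl_injective h)), Set.ncard_univ,
        Nat.card_eq_fintype_card]
    have hU := Set.ncard_union_eq hdisj (Set.toFinite _) (Set.toFinite _)
    have hle := Set.ncard_le_ncard hunion (Set.toFinite S)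
    omega
  · -- some leaf not in S: complement is the singleton of that leaf
    push_neg at hL
    obtain ⟨v, hv⟩ := hL
    have hScompl : Sᶜ = {L v} := by
      apply Set.eq_of_subset_of_subset
      · intro w hw
        by_contra hne
        have hreach := hconn.preconnected ⟨L v, hv⟩ ⟨w, hw⟩
        obtain ⟨walk⟩ := hreach
        have hvw : (⟨L v, hv⟩ : ↥Sᶜ) ≠ ⟨w, hw⟩ := fun h => hne (by
          have := congrArg Subtype.val h; simp_all)
        cases walk with
        | nil => exact hvw rfl
        | cons hadj p =>
          rename_i c
          have hadj' : (middleGraph (corona G)).Adj (L v) c.val := hadj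
          have hc : c.val = P v := leaf_nbr G v c.val hadj'.symm
          -- domination of L v contradicts
          obtain ⟨u, huS, hu⟩ := hdom (L v)
          rcases hu with rfl | hu
          · exact hv huS
          · have : u = P v := leaf_nbr G v u hu
            subst this
            exact (hc ▸ c.prop) huS
      · rintro w rfl
        exact hv
    have : S.ncard + 1 = Nat.card ((V ⊕ V) ⊕ (corona G).edgeSet) := by
      have := Set.ncard_add_ncard_compl S
      rw [hScompl, Set.ncard_singleton] at this
      exact this
    omega
end Lower
end StmtAux

theorem stmt11 {V : Type*} [Fintype V] (G : SimpleGraph V) (n : ℕ)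
    (hn : Fintype.card V = n) (h2 : 2 ≤ n) (hc : G.Connected) :
    n + (n + 1) / 2 ≤ outConnDomNum (middleGraph (corona G)) ∧
      outConnDomNum (middleGraph (corona G)) ≤ 2 * n := by
  subst hn
  have hmem : 2 * Fintype.card V ∈ {k | ∃ S, IsDomSet (middleGraph (corona G)) S ∧
      ((middleGraph (corona G)).induce Sᶜ).Connected ∧ S.ncard = k} :=
    ⟨StmtAux.Svx G, StmtAux.upper_dom G, StmtAux.upper_conn G hc, StmtAux.upper_ncard G⟩
  constructor
  · refine le_csInf ⟨_, hmem⟩ ?_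
    rintro k ⟨S, hdom, hconn, rfl⟩
    exact StmtAux.lower G S hdom hconn h2
  · exact Nat.sInf_le hmem
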